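/- Let (X, μ) be a measure space, let n > 0 be a real number, let j ≥ 1 be a natural number, and let ε > 0. Let f, g, h : X → ℝ be measurable functions with f(x) > 0, g(x) > 0, h(x) > 0 for all x, and suppose that the integrals ∫ f(x)^{-n} dμ, ∫ g(x)^{-n} dμ, ∫ h(x)^{-n} dμ are all finite and strictly positive. If f(x)^{1/j} ≥ g(x)^{1/j} + ε · h(x)^{1/j} for μ-almost every x ∈ X, then (∫_X f(x)^{-n} dμ(x))^{-1/(n j)} ≥ (∫_X g(x)^{-n} dμ(x))^{-1/(n j)} + ε · (∫_X h(x)^{-n} dμ(x))^{-1/(n j)}. -/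

import Mathlib

open MeasureTheory Real

/-- Two-point convexity of `x ↦ x ^ p` on `(0, ∞)` for `p < 0`. -/
lemma aux_rpow_neg_convex {p : ℝ} (hp : p < 0) {x y a b : ℝ} (hx : 0 < x) (hy : 0 < y)
    (ha : 0 ≤ a) (hb : 0 ≤ b) (hab : a + b = 1) :
    (a * x + b * y) ^ p ≤ a * x ^ p + b * y ^ p := by
  have h1 : Real.exp (a * Real.log x + b * Real.log y) ≤ a * x + b * y := by
    have := convexOn_exp.2 (Set.mem_univ (Real.log x)) (Set.mem_univ (Real.log y)) ha hb hab
    simpa [Real.exp_add, Real.exp_log hx, Real.exp_log hy, smul_eq_mul] using this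
  have h2 : (a * x + b * y) ^ p ≤ (Real.exp (a * Real.log x + b * Real.log y)) ^ p :=
    Real.rpow_le_rpow_of_nonpos (Real.exp_pos _) h1 hp.le
  have h3 : (Real.exp (a * Real.log x + b * Real.log y)) ^ p
      = Real.exp (a * (Real.log x * p) + b * (Real.log y * p)) := by
    rw [← Real.exp_mul]; ring_nf
  have h4 : Real.exp (a * (Real.log x * p) + b * (Real.log y * p))
      ≤ a * Real.exp (Real.log x * p) + b * Real.exp (Real.log y * p) := by
    have := convexOn_exp.2 (Set.mem_univ (Real.log x * p)) (Set.mem_univ (Real.log y * p)) ha hb hab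
    simpa [smul_eq_mul] using this
  rw [← Real.rpow_def_of_pos hx, ← Real.rpow_def_of_pos hy] at h4
  calc (a * x + b * y) ^ p ≤ _ := h2
    _ = _ := h3
    _ ≤ _ := h4

/-- Analytic core of the Brunn–Minkowski inequality for affine
quermassintegrals: if `f x ^ (1/j) ≥ g x ^ (1/j) + ε * h x ^ (1/j)` a.e., then
`(∫ f ^ (-n))^(-1/(n j)) ≥ (∫ g ^ (-n))^(-1/(n j)) + ε * (∫ h ^ (-n))^(-1/(n j))`. -/
theorem affine_quermassintegral_brunn_minkowski
    {X : Type*} [MeasurableSpace X] (μ : Measure X)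
    (n : ℝ) (hn : 0 < n) (j : ℕ) (hj : 1 ≤ j) (ε : ℝ) (hε : 0 < ε)
    (f g h : X → ℝ)
    (hf : Measurable f) (hg : Measurable g) (hh : Measurable h)
    (hfpos : ∀ x, 0 < f x) (hgpos : ∀ x, 0 < g x) (hhpos : ∀ x, 0 < h x)
    (hfint : Integrable (fun x => f x ^ (-n)) μ)
    (hgint : Integrable (fun x => g x ^ (-n)) μ)
    (hhint : Integrable (fun x => h x ^ (-n)) μ)
    (hfI : 0 < ∫ x, f x ^ (-n) ∂μ)
    (hgI : 0 < ∫ x, g x ^ (-n) ∂μ)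
    (hhI : 0 < ∫ x, h x ^ (-n) ∂μ)
    (hae : ∀ᵐ x ∂μ, f x ^ (1 / (j : ℝ)) ≥ g x ^ (1 / (j : ℝ)) + ε * h x ^ (1 / (j : ℝ))) :
    (∫ x, f x ^ (-n) ∂μ) ^ (-1 / (n * (j : ℝ))) ≥
      (∫ x, g x ^ (-n) ∂μ) ^ (-1 / (n * (j : ℝ))) +
        ε * (∫ x, h x ^ (-n) ∂μ) ^ (-1 / (n * (j : ℝ))) := by
  have hj0 : (0 : ℝ) < (j : ℝ) := by exact_mod_cast hj
  set p : ℝ := -(n * (j : ℝ)) with hpdef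
  have hp : p < 0 := by simp only [hpdef]; nlinarith
  have hpne : p ≠ 0 := hp.ne
  have hexp : -1 / (n * (j : ℝ)) = p⁻¹ := by
    rw [hpdef]; field_simp
  set G := ∫ x, g x ^ (-n) ∂μ with hGdef
  set H := ∫ x, h x ^ (-n) ∂μ with hHdef
  set F := ∫ x, f x ^ (-n) ∂μ with hFdef
  set A := G ^ (-1 / (n * (j : ℝ))) with hAdef
  set B := H ^ (-1 / (n * (j : ℝ))) with hBdef
  have hApos : 0 < A := Real.rpow_pos_of_pos hgI _
  have hBpos : 0 < B := Real.rpow_pos_of_pos hhI _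
  set S := A + ε * B with hSdef
  have hSpos : 0 < S := by positivity
  have hGA : A ^ p = G := by
    rw [hAdef, hexp, Real.rpow_inv_rpow hgI.le hpne]
  have hHB : B ^ p = H := by
    rw [hBdef, hexp, Real.rpow_inv_rpow hhI.le hpne]
  set a : ℝ := A / S with hadef
  set b : ℝ := ε * B / S with hbdef
  have ha : 0 < a := by positivity
  have hb : 0 < b := by positivity
  have hab : a + b = 1 := by
    rw [hadef, hbdef, ← add_div, hSdef, div_self hSpos.ne']
  -- pointwise bound
  have key : ∀ᵐ x ∂μ, f x ^ (-n) ≤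
      a ^ (1 - p) * g x ^ (-n) + b ^ (1 - p) * ε ^ p * h x ^ (-n) := by
    filter_upwards [hae] with x hx
    have hu : (0 : ℝ) < g x ^ (1 / (j : ℝ)) := Real.rpow_pos_of_pos (hgpos x) _
    have hv : (0 : ℝ) < ε * h x ^ (1 / (j : ℝ)) := mul_pos hε (Real.rpow_pos_of_pos (hhpos x) _)
    have ej : 1 / (j : ℝ) * p = -n := by rw [hpdef]; field_simp
    have ef : f x ^ (-n) = (f x ^ (1 / (j : ℝ))) ^ p := by
      rw [← Real.rpow_mul (hfpos x).le, ej]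
    have eg : (g x ^ (1 / (j : ℝ))) ^ p = g x ^ (-n) := by
      rw [← Real.rpow_mul (hgpos x).le, ej]
    have eh : (h x ^ (1 / (j : ℝ))) ^ p = h x ^ (-n) := by
      rw [← Real.rpow_mul (hhpos x).le, ej]
    have step1 : (f x ^ (1 / (j : ℝ))) ^ p
        ≤ (g x ^ (1 / (j : ℝ)) + ε * h x ^ (1 / (j : ℝ))) ^ p :=
      Real.rpow_le_rpow_of_nonpos (by positivity) hx hp.le
    have step2 : (g x ^ (1 / (j : ℝ)) + ε * h x ^ (1 / (j : ℝ))) ^ p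
        ≤ a * (g x ^ (1 / (j : ℝ)) / a) ^ p + b * (ε * h x ^ (1 / (j : ℝ)) / b) ^ p := by
      have h0 : g x ^ (1 / (j : ℝ)) + ε * h x ^ (1 / (j : ℝ))
          = a * (g x ^ (1 / (j : ℝ)) / a) + b * (ε * h x ^ (1 / (j : ℝ)) / b) := by
        rw [mul_div_cancel₀ _ ha.ne', mul_div_cancel₀ _ hb.ne']
      rw [h0]
      exact aux_rpow_neg_convex hp (div_pos hu ha) (div_pos hv hb) ha.le hb.le hab
    have e2 : a * (g x ^ (1 / (j : ℝ)) / a) ^ p = a ^ (1 - p) * g x ^ (-n) := by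
      rw [Real.div_rpow hu.le ha.le, eg, Real.rpow_sub ha, Real.rpow_one]
      field_simp
    have e3 : b * (ε * h x ^ (1 / (j : ℝ)) / b) ^ p = b ^ (1 - p) * ε ^ p * h x ^ (-n) := by
      rw [Real.div_rpow hv.le hb.le, Real.mul_rpow hε.le (Real.rpow_pos_of_pos (hhpos x) _).le,
        eh, Real.rpow_sub hb, Real.rpow_one]
      field_simp
    calc f x ^ (-n) = (f x ^ (1 / (j : ℝ))) ^ p := ef
      _ ≤ _ := step1
      _ ≤ _ := step2
      _ = _ := by rw [e2, e3]
  -- integrate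
  have hFle : F ≤ a ^ (1 - p) * G + b ^ (1 - p) * ε ^ p * H := by
    have hint : Integrable (fun x => a ^ (1 - p) * g x ^ (-n)
        + b ^ (1 - p) * ε ^ p * h x ^ (-n)) μ :=
      (hgint.const_mul _).add (hhint.const_mul _)
    calc F ≤ ∫ x, (a ^ (1 - p) * g x ^ (-n) + b ^ (1 - p) * ε ^ p * h x ^ (-n)) ∂μ :=
        integral_mono_ae hfint hint key
      _ = a ^ (1 - p) * G + b ^ (1 - p) * ε ^ p * H := by
        rw [integral_add (hgint.const_mul _) (hhint.const_mul _),
          integral_const_mul, integral_const_mul]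
  -- algebraic identity: RHS = S ^ p
  have hid : a ^ (1 - p) * G + b ^ (1 - p) * ε ^ p * H = S ^ p := by
    rw [← hGA, ← hHB, hadef, hbdef, Real.div_rpow hApos.le hSpos.le,
      Real.div_rpow (by positivity) hSpos.le,
      Real.mul_rpow hε.le hBpos.le]
    have hA1 : A ^ (1 - p) * A ^ p = A := by
      rw [← Real.rpow_add hApos]; simp
    have hB1 : B ^ (1 - p) * B ^ p = B := by
      rw [← Real.rpow_add hBpos]; simp
    have he1 : ε ^ (1 - p) * ε ^ p = ε := by
      rw [← Real.rpow_add hε]; simp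
    have hS1 : S / S ^ (1 - p) = S ^ p := by
      rw [eq_comm, eq_div_iff (by positivity), ← Real.rpow_add hSpos]
      simp
    rw [div_mul_eq_mul_div, div_mul_eq_mul_div, div_mul_eq_mul_div, ← add_div, div_eq_iff (by positivity)]
    calc A ^ (1 - p) * A ^ p + ε ^ (1 - p) * B ^ (1 - p) * ε ^ p * B ^ p
        = A + ε * B := by rw [hA1]; rw [show ε ^ (1-p) * B ^ (1-p) * ε ^ p * B ^ p
            = (ε ^ (1-p) * ε ^ p) * (B ^ (1-p) * B ^ p) by ring, he1, hB1]
      _ = S ^ p * S ^ (1 - p) := by rw [← Real.rpow_add hSpos]; simp [hSdef]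
  have hFS : F ≤ S ^ p := hid ▸ hFle
  have hq : -1 / (n * (j : ℝ)) ≤ 0 := by rw [hexp]; exact inv_nonpos.mpr hp.le
  have h1 : (S ^ p) ^ (-1 / (n * (j : ℝ))) ≤ F ^ (-1 / (n * (j : ℝ))) :=
    Real.rpow_le_rpow_of_nonpos hfI hFS hq
  have h2 : (S ^ p) ^ (-1 / (n * (j : ℝ))) = S := by
    rw [← Real.rpow_mul hSpos.le,
      show p * (-1 / (n * (j : ℝ))) = 1 by rw [hpdef]; field_simp]
    exact Real.rpow_one S
  rw [h2] at h1
  exact h1
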